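/- Let m ≤ n, λ > 0, and Z ∈ ℝ^{m×n} with Z ≠ 0 and singular value decomposition Z = U Σ Vᵀ, where Σ = diag(σ₁, …, σ_m) with σ₁ ≥ ⋯ ≥ σ_m ≥ 0, and let u₁, v₁ denote the first columns of U and V. Suppose σ_i ≤ λ for every i (i.e., w with w_i = max(σ_i − λ, 0) is zero). Then X* = σ₁ u₁ v₁ᵀ is a global minimizer over X ∈ ℝ^{m×n} of Ψ(X) = (1/2)‖X − Z‖_F² + λ(‖X‖_* − ‖X‖_F). -/

import Mathlib

open Matrix

/-- Nuclear norm of a real `m × n` matrix: the sum of its singular values, i.e. the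
sum of the square roots of the eigenvalues of `X Xᵀ`. -/
noncomputable def nuclearNorm {m n : ℕ} (X : Matrix (Fin m) (Fin n) ℝ) : ℝ :=
  ∑ i, Real.sqrt ((Matrix.isHermitian_mul_conjTranspose_self X).eigenvalues i)

/-- Frobenius norm of a real `m × n` matrix. -/
noncomputable def frobNorm {m n : ℕ} (X : Matrix (Fin m) (Fin n) ℝ) : ℝ :=
  Real.sqrt (∑ i, ∑ j, (X i j) ^ 2)



variable {m n : ℕ}

lemma trace_form (A B : Matrix (Fin m) (Fin n) ℝ) :
    (A * Bᴴ).trace = ∑ i, ∑ j, A i j * B i j := by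
  simp [Matrix.trace, Matrix.mul_apply, Matrix.diag, Matrix.conjTranspose_apply]

lemma spectral' (Y : Matrix (Fin m) (Fin n) ℝ) :
    Y * Yᴴ = ((Matrix.isHermitian_mul_conjTranspose_self Y).eigenvectorUnitary :
        Matrix (Fin m) (Fin m) ℝ)
      * Matrix.diagonal ((Matrix.isHermitian_mul_conjTranspose_self Y).eigenvalues)
      * ((Matrix.isHermitian_mul_conjTranspose_self Y).eigenvectorUnitary :
        Matrix (Fin m) (Fin m) ℝ)ᴴ := by
  have h := (Matrix.isHermitian_mul_conjTranspose_self Y).spectral_theorem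
  simpa [Matrix.star_eq_conjTranspose, Function.comp] using h

lemma unit1' (Y : Matrix (Fin m) (Fin n) ℝ) :
    ((Matrix.isHermitian_mul_conjTranspose_self Y).eigenvectorUnitary :
        Matrix (Fin m) (Fin m) ℝ)ᴴ *
    ((Matrix.isHermitian_mul_conjTranspose_self Y).eigenvectorUnitary :
        Matrix (Fin m) (Fin m) ℝ) = 1 := by
  have := (Matrix.isHermitian_mul_conjTranspose_self Y).eigenvectorUnitary.2
  rw [Matrix.mem_unitaryGroup_iff'] at this
  simpa [Matrix.star_eq_conjTranspose] using this

lemma trace_eig (Y : Matrix (Fin m) (Fin n) ℝ) :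
    (Y * Yᴴ).trace = ∑ i, (Matrix.isHermitian_mul_conjTranspose_self Y).eigenvalues i := by
  rw [congrArg Matrix.trace (spectral' Y), Matrix.trace_mul_cycle]
  rw [unit1' Y, Matrix.one_mul, Matrix.trace_diagonal]

lemma trace_eig_sq (Y : Matrix (Fin m) (Fin n) ℝ) :
    ((Y * Yᴴ) * (Y * Yᴴ)).trace
      = ∑ i, ((Matrix.isHermitian_mul_conjTranspose_self Y).eigenvalues i) ^ 2 := by
  set P := ((Matrix.isHermitian_mul_conjTranspose_self Y).eigenvectorUnitary :
        Matrix (Fin m) (Fin m) ℝ)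
  set e := (Matrix.isHermitian_mul_conjTranspose_self Y).eigenvalues
  have h : (Y * Yᴴ) * (Y * Yᴴ) = P * (Matrix.diagonal e * Matrix.diagonal e) * Pᴴ := by
    rw [congrArg (fun B => B * B) (spectral' Y)]
    calc P * Matrix.diagonal e * Pᴴ * (P * Matrix.diagonal e * Pᴴ)
        = P * Matrix.diagonal e * (Pᴴ * P) * Matrix.diagonal e * Pᴴ := by
          simp [Matrix.mul_assoc]
      _ = P * (Matrix.diagonal e * Matrix.diagonal e) * Pᴴ := by
          rw [unit1' Y]; simp [Matrix.mul_assoc]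
  rw [congrArg Matrix.trace h, Matrix.trace_mul_cycle, ← Matrix.mul_assoc, unit1' Y, Matrix.one_mul,
    Matrix.diagonal_mul_diagonal, Matrix.trace_diagonal]
  simp [pow_two]

lemma unit2' (Y : Matrix (Fin m) (Fin n) ℝ) :
    ((Matrix.isHermitian_mul_conjTranspose_self Y).eigenvectorUnitary :
        Matrix (Fin m) (Fin m) ℝ) *
    ((Matrix.isHermitian_mul_conjTranspose_self Y).eigenvectorUnitary :
        Matrix (Fin m) (Fin m) ℝ)ᴴ = 1 := by
  have := (Matrix.isHermitian_mul_conjTranspose_self Y).eigenvectorUnitary.2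
  rw [Matrix.mem_unitaryGroup_iff] at this
  simpa [Matrix.star_eq_conjTranspose] using this

lemma gram {m n : ℕ} (V : Matrix (Fin n) (Fin m) ℝ) (W : Matrix (Fin m) (Fin m) ℝ)
    (σ : Fin m → ℝ) (hV : Vᵀ * V = 1) :
    (V * Matrix.diagonal σ * W)ᵀ * (V * Matrix.diagonal σ * W)
      = Wᵀ * (Matrix.diagonal (fun j => σ j ^ 2) * W) := by
  have hdd : Matrix.diagonal σ * Matrix.diagonal σ
      = Matrix.diagonal (fun j => σ j ^ 2) := by
    rw [Matrix.diagonal_mul_diagonal]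
    congr 1
    funext j
    ring
  rw [Matrix.transpose_mul, Matrix.transpose_mul, Matrix.diagonal_transpose]
  calc Wᵀ * (Matrix.diagonal σ * Vᵀ) * (V * Matrix.diagonal σ * W)
      = Wᵀ * (Matrix.diagonal σ * ((Vᵀ * V) * (Matrix.diagonal σ * W))) := by
        simp only [Matrix.mul_assoc]
    _ = Wᵀ * (Matrix.diagonal σ * (Matrix.diagonal σ * W)) := by
        rw [hV, Matrix.one_mul]
    _ = Wᵀ * (Matrix.diagonal (fun j => σ j ^ 2) * W) := by
        rw [← Matrix.mul_assoc (Matrix.diagonal σ), hdd]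

lemma dual_bound (hm : 1 ≤ m) (Y : Matrix (Fin m) (Fin n) ℝ)
    (Z : Matrix (Fin m) (Fin n) ℝ)
    (U : Matrix (Fin m) (Fin m) ℝ) (V : Matrix (Fin n) (Fin m) ℝ)
    (σ : Fin m → ℝ)
    (hU : Uᵀ * U = 1) (hV : Vᵀ * V = 1)
    (hσnn : ∀ i : Fin m, 0 ≤ σ i)
    (hσ0 : ∀ j : Fin m, σ j ≤ σ ⟨0, hm⟩)
    (hZ : Z = U * Matrix.diagonal σ * Vᵀ) :
    ∑ i, ∑ j, Y i j * Z i j ≤ σ ⟨0, hm⟩ * nuclearNorm Y := by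
  set σ0 := σ ⟨0, hm⟩ with hσ0def
  have hσ0nn : 0 ≤ σ0 := hσnn _
  set P := ((Matrix.isHermitian_mul_conjTranspose_self Y).eigenvectorUnitary :
        Matrix (Fin m) (Fin m) ℝ) with hP
  set e := (Matrix.isHermitian_mul_conjTranspose_self Y).eigenvalues with he
  set M := Pᴴ * Y with hM
  set N := Zᴴ * P with hN
  -- rewrite the sum as a trace
  have h1 : ∑ i, ∑ j, Y i j * Z i j = (M * N).trace := by
    rw [← trace_form Y Z]
    calc (Y * Zᴴ).trace = (Y * Zᴴ * (P * Pᴴ)).trace := by rw [unit2' Y, Matrix.mul_one]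
      _ = (M * N).trace := by
          rw [hM, hN, ← Matrix.mul_assoc, Matrix.trace_mul_cycle]
          simp [Matrix.mul_assoc]
  -- row norms of M are sqrt of eigenvalues
  have h3 : ∀ i, ∑ k, (M i k) ^ 2 = e i := by
    intro i
    have hMM : M * Mᴴ = Matrix.diagonal e := by
      rw [hM, Matrix.conjTranspose_mul, Matrix.conjTranspose_conjTranspose]
      calc Pᴴ * Y * (Yᴴ * P) = Pᴴ * (Y * Yᴴ) * P := by simp [Matrix.mul_assoc]
        _ = Pᴴ * (P * Matrix.diagonal e * Pᴴ) * P := by rw [← spectral' Y]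
        _ = (Pᴴ * P) * Matrix.diagonal e * (Pᴴ * P) := by simp [Matrix.mul_assoc]
        _ = Matrix.diagonal e := by rw [unit1' Y]; simp
    have := congrFun (congrFun hMM i) i
    simp [Matrix.mul_apply, Matrix.conjTranspose_apply, pow_two] at this ⊢
    rw [this]
  -- column norms of N are at most σ0
  have h4 : ∀ i, ∑ k, (N k i) ^ 2 ≤ σ0 ^ 2 := by
    intro i
    set W := Uᵀ * P with hW
    have hWcol : ∑ j, (W j i) ^ 2 = 1 := by
      have hUU : U * Uᵀ = 1 := mul_eq_one_comm.mp hU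
      have hWW : Wᵀ * W = 1 := by
        rw [hW, Matrix.transpose_mul, Matrix.transpose_transpose]
        calc Pᵀ * U * (Uᵀ * P) = Pᵀ * (U * Uᵀ) * P := by simp [Matrix.mul_assoc]
          _ = Pᵀ * P := by rw [hUU]; simp
          _ = 1 := by
              have := unit1' Y
              rwa [Matrix.conjTranspose_eq_transpose_of_trivial] at this
      have := congrFun (congrFun hWW i) i
      simpa [Matrix.mul_apply, Matrix.one_apply, pow_two] using this
    have hNmat : N = V * Matrix.diagonal σ * W := by
      rw [hN, hZ, hW]
      simp only [Matrix.conjTranspose_eq_transpose_of_trivial, Matrix.transpose_mul,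
        Matrix.transpose_transpose, Matrix.diagonal_transpose, Matrix.mul_assoc]
    have hQ : Nᵀ * N = Wᵀ * (Matrix.diagonal (fun j => σ j ^ 2) * W) := by
      rw [congrArg Matrix.transpose hNmat, hNmat]
      exact gram V W σ hV
    have hentry : ∑ k, (N k i) ^ 2 = ∑ j, σ j ^ 2 * (W j i) ^ 2 := by
      have h0 := congrFun (congrFun hQ i) i
      have hL : (Nᵀ * N) i i = ∑ k, N k i ^ 2 := by
        simp [Matrix.mul_apply, pow_two]
      have hR : (Wᵀ * (Matrix.diagonal (fun j => σ j ^ 2) * W)) i i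
          = ∑ j, σ j ^ 2 * (W j i) ^ 2 := by
        simp [Matrix.mul_apply, Matrix.transpose_apply, Matrix.diagonal_apply,
          Finset.mul_sum, pow_two]
        apply Finset.sum_congr rfl
        intro j _
        ring
      rw [← hL, h0, hR]
    rw [hentry]
    calc ∑ j, σ j ^ 2 * (W j i) ^ 2 ≤ ∑ j, σ0 ^ 2 * (W j i) ^ 2 := by
          apply Finset.sum_le_sum
          intro j _
          have : σ j ^ 2 ≤ σ0 ^ 2 := by nlinarith [hσnn j, hσ0 j]
          nlinarith [sq_nonneg (W j i)]
      _ = σ0 ^ 2 := by rw [← Finset.mul_sum, hWcol, mul_one]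
  -- finish: Cauchy–Schwarz rowwise
  have hi : ∀ i, ∑ k, M i k * N k i ≤ Real.sqrt (e i) * σ0 := by
    intro i
    have henn : 0 ≤ e i :=
      Matrix.eigenvalues_self_mul_conjTranspose_nonneg Y i
    have cs := Finset.sum_mul_sq_le_sq_mul_sq Finset.univ (fun k => M i k) (fun k => N k i)
    have hb : (∑ k, M i k * N k i) ^ 2 ≤ e i * σ0 ^ 2 := by
      refine le_trans cs ?_
      rw [h3 i]
      exact mul_le_mul_of_nonneg_left (h4 i) henn
    calc ∑ k, M i k * N k i ≤ |∑ k, M i k * N k i| := le_abs_self _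
      _ = Real.sqrt ((∑ k, M i k * N k i) ^ 2) := (Real.sqrt_sq_eq_abs _).symm
      _ ≤ Real.sqrt (e i * σ0 ^ 2) := Real.sqrt_le_sqrt hb
      _ = Real.sqrt (e i) * σ0 := by
          rw [Real.sqrt_mul henn, Real.sqrt_sq hσ0nn]
  rw [h1]
  have htr : (M * N).trace = ∑ i, ∑ k, M i k * N k i := by
    simp [Matrix.trace, Matrix.mul_apply, Matrix.diag]
  rw [htr, nuclearNorm, Finset.mul_sum]
  refine le_trans (Finset.sum_le_sum fun i _ => hi i) ?_
  apply le_of_eq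
  apply Finset.sum_congr rfl
  intro i _
  rw [mul_comm]

-- degenerate-sum lemma
lemma sqrt_sum_eq (e : Fin m → ℝ) (hnn : ∀ i, 0 ≤ e i) (a : ℝ) (ha : 0 ≤ a)
    (h1 : ∑ i, e i = a ^ 2) (h2 : ∑ i, (e i) ^ 2 = a ^ 4) :
    ∑ i, Real.sqrt (e i) = a := by
  have hsplit : ∀ (f : Fin m → Fin m → ℝ), ∀ i,
      ∑ j, f i j = f i i + ∑ j ∈ Finset.univ.erase i, f i j := by
    intro f i
    rw [← Finset.add_sum_erase _ _ (Finset.mem_univ i)]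
  have expand : ∑ i, ∑ j, e i * e j = a ^ 4 := by
    rw [← Finset.sum_mul_sum, h1]
    ring
  have hoff : ∑ i, ∑ j ∈ Finset.univ.erase i, e i * e j = 0 := by
    have : ∑ i, ∑ j, e i * e j
        = ∑ i, ((e i) ^ 2 + ∑ j ∈ Finset.univ.erase i, e i * e j) := by
      apply Finset.sum_congr rfl
      intro i _
      rw [hsplit (fun i j => e i * e j) i]
      ring_nf
    rw [expand] at this
    rw [Finset.sum_add_distrib, h2] at this
    linarith
  have key : ∀ i, ∀ j ∈ Finset.univ.erase i, e i * e j = 0 := by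
    have h0 : ∀ i ∈ Finset.univ, (0:ℝ) ≤ ∑ j ∈ Finset.univ.erase i, e i * e j := by
      intro i _
      exact Finset.sum_nonneg fun j _ => mul_nonneg (hnn i) (hnn j)
    intro i j hj
    have hz := (Finset.sum_eq_zero_iff_of_nonneg h0).mp hoff i (Finset.mem_univ i)
    exact (Finset.sum_eq_zero_iff_of_nonneg
      (fun j _ => mul_nonneg (hnn i) (hnn j))).mp hz j hj
  have hsq : (∑ i, Real.sqrt (e i)) ^ 2 = a ^ 2 := by
    have : (∑ i, Real.sqrt (e i)) ^ 2 = ∑ i, ∑ j, Real.sqrt (e i) * Real.sqrt (e j) := by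
      rw [← Finset.sum_mul_sum]
      ring
    rw [this]
    have : ∀ i, ∑ j, Real.sqrt (e i) * Real.sqrt (e j) = e i := by
      intro i
      rw [hsplit (fun i j => Real.sqrt (e i) * Real.sqrt (e j)) i]
      have hz : ∑ j ∈ Finset.univ.erase i, Real.sqrt (e i) * Real.sqrt (e j) = 0 := by
        apply Finset.sum_eq_zero
        intro j hj
        rw [← Real.sqrt_mul (hnn i), key i j hj, Real.sqrt_zero]
      rw [hz, add_zero, ← Real.sqrt_mul (hnn i), Real.sqrt_mul_self (hnn i)]
    rw [Finset.sum_congr rfl (fun i _ => this i), h1]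
  have hpos : 0 ≤ ∑ i, Real.sqrt (e i) :=
    Finset.sum_nonneg fun i _ => Real.sqrt_nonneg _
  nlinarith [hsq, hpos, ha]

lemma frob_le_nuclear (Y : Matrix (Fin m) (Fin n) ℝ) : frobNorm Y ≤ nuclearNorm Y := by
  set e := (Matrix.isHermitian_mul_conjTranspose_self Y).eigenvalues with he
  have hnn : ∀ i, 0 ≤ e i := fun i =>
    Matrix.eigenvalues_self_mul_conjTranspose_nonneg Y i
  have h : ∑ i, ∑ j, (Y i j) ^ 2 = ∑ i, e i := by
    rw [← trace_eig Y, trace_form]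
    simp [pow_two]
  rw [frobNorm, nuclearNorm, h]
  have h2 : ∑ i, e i ≤ (∑ i, Real.sqrt (e i)) ^ 2 := by
    have := Finset.sum_sq_le_sq_sum_of_nonneg
      (f := fun i => Real.sqrt (e i)) (s := (Finset.univ : Finset (Fin m)))
      (fun i _ => Real.sqrt_nonneg _)
    calc ∑ i, e i = ∑ i, (Real.sqrt (e i)) ^ 2 := by
          apply Finset.sum_congr rfl
          intro i _
          rw [Real.sq_sqrt (hnn i)]
      _ ≤ (∑ i, Real.sqrt (e i)) ^ 2 := this
  calc Real.sqrt (∑ i, e i) ≤ Real.sqrt ((∑ i, Real.sqrt (e i)) ^ 2) :=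
        Real.sqrt_le_sqrt h2
    _ = ∑ i, Real.sqrt (e i) :=
        Real.sqrt_sq (Finset.sum_nonneg fun i _ => Real.sqrt_nonneg _)

lemma svd_gram (U : Matrix (Fin m) (Fin m) ℝ) (V : Matrix (Fin n) (Fin m) ℝ)
    (s : Fin m → ℝ) (hV : Vᵀ * V = 1) :
    (U * Matrix.diagonal s * Vᵀ) * (U * Matrix.diagonal s * Vᵀ)ᴴ
      = U * Matrix.diagonal (fun j => s j ^ 2) * Uᵀ := by
  have hdd : Matrix.diagonal s * Matrix.diagonal s
      = Matrix.diagonal (fun j => s j ^ 2) := by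
    rw [Matrix.diagonal_mul_diagonal]
    congr 1
    funext j
    ring
  rw [Matrix.conjTranspose_eq_transpose_of_trivial, Matrix.transpose_mul,
    Matrix.transpose_mul, Matrix.transpose_transpose, Matrix.diagonal_transpose]
  calc U * Matrix.diagonal s * Vᵀ * (Vᵀᵀ * (Matrix.diagonal s * Uᵀ))
      = U * (Matrix.diagonal s * ((Vᵀ * Vᵀᵀ) * (Matrix.diagonal s * Uᵀ))) := by
        simp only [Matrix.mul_assoc]
    _ = U * (Matrix.diagonal s * (Matrix.diagonal s * Uᵀ)) := by
        rw [Matrix.transpose_transpose, hV, Matrix.one_mul]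
    _ = U * Matrix.diagonal (fun j => s j ^ 2) * Uᵀ := by
        rw [← Matrix.mul_assoc (Matrix.diagonal s), hdd, Matrix.mul_assoc]

lemma trace_UDU (U : Matrix (Fin m) (Fin m) ℝ) (t : Fin m → ℝ) (hU : Uᵀ * U = 1) :
    (U * Matrix.diagonal t * Uᵀ).trace = ∑ k, t k := by
  rw [Matrix.trace_mul_cycle, hU, Matrix.one_mul, Matrix.trace_diagonal]

lemma sq_UDU (U : Matrix (Fin m) (Fin m) ℝ) (t : Fin m → ℝ) (hU : Uᵀ * U = 1) :
    (U * Matrix.diagonal t * Uᵀ) * (U * Matrix.diagonal t * Uᵀ)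
      = U * Matrix.diagonal (fun j => t j ^ 2) * Uᵀ := by
  have hdd : Matrix.diagonal t * Matrix.diagonal t
      = Matrix.diagonal (fun j => t j ^ 2) := by
    rw [Matrix.diagonal_mul_diagonal]
    congr 1
    funext j
    ring
  calc U * Matrix.diagonal t * Uᵀ * (U * Matrix.diagonal t * Uᵀ)
      = U * (Matrix.diagonal t * ((Uᵀ * U) * (Matrix.diagonal t * Uᵀ))) := by
        simp only [Matrix.mul_assoc]
    _ = U * (Matrix.diagonal t * (Matrix.diagonal t * Uᵀ)) := by
        rw [hU, Matrix.one_mul]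
    _ = U * Matrix.diagonal (fun j => t j ^ 2) * Uᵀ := by
        rw [← Matrix.mul_assoc (Matrix.diagonal t), hdd, Matrix.mul_assoc]

lemma frob_svd (U : Matrix (Fin m) (Fin m) ℝ) (V : Matrix (Fin n) (Fin m) ℝ)
    (s : Fin m → ℝ) (hU : Uᵀ * U = 1) (hV : Vᵀ * V = 1) :
    ∑ i, ∑ j, ((U * Matrix.diagonal s * Vᵀ) i j) ^ 2 = ∑ k, s k ^ 2 := by
  have h1 : ∑ i, ∑ j, ((U * Matrix.diagonal s * Vᵀ) i j) ^ 2
      = ((U * Matrix.diagonal s * Vᵀ) * (U * Matrix.diagonal s * Vᵀ)ᴴ).trace := by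
    rw [trace_form]
    simp [pow_two]
  rw [h1, svd_gram U V s hV, trace_UDU U _ hU]

/-- For `m ≤ n`, `λ > 0` and `Z ≠ 0` with SVD `Z = U Σ Vᵀ` whose
nonincreasing nonnegative singular values all satisfy `σ_i ≤ λ`, the rank-one matrix
`X* = σ₁ u₁ v₁ᵀ` (with `u₁, v₁` the first columns of `U`, `V`) is a global minimizer
of `Ψ(X) = (1/2)‖X − Z‖_F² + λ(‖X‖_* − ‖X‖_F)`. -/

theorem nuclear_minus_frobenius_prox_closed_form_zero
    (m n : ℕ) (hm : 1 ≤ m) (hmn : m ≤ n) (lam : ℝ) (hlam : 0 < lam)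
    (Z : Matrix (Fin m) (Fin n) ℝ) (hZne : Z ≠ 0)
    (U : Matrix (Fin m) (Fin m) ℝ) (V : Matrix (Fin n) (Fin m) ℝ)
    (σ : Fin m → ℝ)
    (hU : Uᵀ * U = 1) (hV : Vᵀ * V = 1)
    (hσa : ∀ i j : Fin m, i ≤ j → σ j ≤ σ i) (hσnn : ∀ i : Fin m, 0 ≤ σ i)
    (hZ : Z = U * Matrix.diagonal σ * Vᵀ)
    (hσle : ∀ i : Fin m, σ i ≤ lam)
    (Psi : Matrix (Fin m) (Fin n) ℝ → ℝ)
    (hPsi : ∀ X : Matrix (Fin m) (Fin n) ℝ, Psi X =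
      (1 / 2) * (∑ i, ∑ j, (X i j - Z i j) ^ 2)
        + lam * (nuclearNorm X - frobNorm X))
    (Xstar : Matrix (Fin m) (Fin n) ℝ)
    (hXstar : Xstar = fun i j => σ ⟨0, hm⟩ * U i ⟨0, hm⟩ * V j ⟨0, hm⟩) :
    ∀ Y : Matrix (Fin m) (Fin n) ℝ, Psi Xstar ≤ Psi Y := by
  intro Y
  set i0 : Fin m := ⟨0, hm⟩ with hi0
  set σ0 := σ i0 with hσ0def
  have hσ0nn : 0 ≤ σ0 := hσnn i0
  set σ' : Fin m → ℝ := fun k => if k = i0 then σ0 else 0 with hσ'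
  -- Xstar as an SVD product
  have hXmat : Xstar = U * Matrix.diagonal σ' * Vᵀ := by
    subst hXstar
    ext i j
    rw [Matrix.mul_apply]
    simp only [Matrix.mul_diagonal, Matrix.transpose_apply, hσ', mul_ite, ite_mul,
      mul_zero, zero_mul, Finset.sum_ite_eq', Finset.mem_univ, if_true]
    ring
  -- sums over σ'
  have hs2 : ∑ k, σ' k ^ 2 = σ0 ^ 2 := by
    have h : ∀ k, σ' k ^ 2 = if k = i0 then σ0 ^ 2 else 0 := by
      intro k
      by_cases h : k = i0 <;> simp [hσ', h]
    rw [Finset.sum_congr rfl (fun k _ => h k), Finset.sum_ite_eq' Finset.univ i0]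
    simp
  have hs4 : ∑ k, (σ' k ^ 2) ^ 2 = σ0 ^ 4 := by
    have h : ∀ k, (σ' k ^ 2) ^ 2 = if k = i0 then σ0 ^ 4 else 0 := by
      intro k
      by_cases h : k = i0 <;> simp [hσ', h] <;> ring
    rw [Finset.sum_congr rfl (fun k _ => h k), Finset.sum_ite_eq' Finset.univ i0]
    simp
  -- Frobenius distance from Xstar to Z
  have hXZ : ∑ i, ∑ j, (Xstar i j - Z i j) ^ 2 = (∑ k, σ k ^ 2) - σ0 ^ 2 := by
    have hdiff : Xstar - Z = U * Matrix.diagonal (fun k => σ' k - σ k) * Vᵀ := by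
      rw [hXmat, hZ, ← Matrix.sub_mul, ← Matrix.mul_sub, Matrix.diagonal_sub]
    calc ∑ i, ∑ j, (Xstar i j - Z i j) ^ 2
        = ∑ i, ∑ j, ((U * Matrix.diagonal (fun k => σ' k - σ k) * Vᵀ) i j) ^ 2 := by
          rw [← hdiff]
          simp [Matrix.sub_apply]
      _ = ∑ k, (σ' k - σ k) ^ 2 := frob_svd U V _ hU hV
      _ = (∑ k, σ k ^ 2) - σ0 ^ 2 := by
          have : ∀ k, (σ' k - σ k) ^ 2 = σ k ^ 2 - (if k = i0 then σ k ^ 2 else 0) := by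
            intro k
            by_cases h : k = i0
            · subst h; simp [hσ', hσ0def]
            · simp [hσ', h]
          rw [Finset.sum_congr rfl (fun k _ => this k), Finset.sum_sub_distrib]
          simp [hσ0def]
  -- nuclear and Frobenius norms of Xstar
  have hXfrob2 : ∑ i, ∑ j, (Xstar i j) ^ 2 = σ0 ^ 2 := by
    rw [hXmat, frob_svd U V σ' hU hV, hs2]
  have hfrobX : frobNorm Xstar = σ0 := by
    rw [frobNorm, hXfrob2, Real.sqrt_sq hσ0nn]
  have hnucX : nuclearNorm Xstar = σ0 := by
    set e := (Matrix.isHermitian_mul_conjTranspose_self Xstar).eigenvalues with he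
    have hnn : ∀ i, 0 ≤ e i := fun i =>
      Matrix.eigenvalues_self_mul_conjTranspose_nonneg Xstar i
    have hB : Xstar * Xstarᴴ = U * Matrix.diagonal (fun j => σ' j ^ 2) * Uᵀ := by
      rw [hXmat]
      exact svd_gram U V σ' hV
    have h1 : ∑ i, e i = σ0 ^ 2 := by
      rw [← trace_eig Xstar, hB, trace_UDU U _ hU, hs2]
    have h2 : ∑ i, e i ^ 2 = σ0 ^ 4 := by
      rw [← trace_eig_sq Xstar, hB, sq_UDU U _ hU, trace_UDU U _ hU, hs4]
    exact sqrt_sum_eq e hnn σ0 hσ0nn h1 h2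
  -- Frobenius norm of Z
  have hZfrob : ∑ i, ∑ j, (Z i j) ^ 2 = ∑ k, σ k ^ 2 := by
    rw [hZ]
    exact frob_svd U V σ hU hV
  -- expansion of the quadratic for Y
  have hFnn : 0 ≤ frobNorm Y := Real.sqrt_nonneg _
  have hF2 : frobNorm Y ^ 2 = ∑ i, ∑ j, (Y i j) ^ 2 :=
    Real.sq_sqrt (Finset.sum_nonneg fun i _ =>
      Finset.sum_nonneg fun j _ => sq_nonneg _)
  have expand : ∑ i, ∑ j, (Y i j - Z i j) ^ 2
      = frobNorm Y ^ 2 - 2 * (∑ i, ∑ j, Y i j * Z i j) + ∑ k, σ k ^ 2 := by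
    rw [hF2, ← hZfrob, Finset.mul_sum, ← Finset.sum_sub_distrib, ← Finset.sum_add_distrib]
    apply Finset.sum_congr rfl
    intro i _
    rw [Finset.mul_sum, ← Finset.sum_sub_distrib, ← Finset.sum_add_distrib]
    apply Finset.sum_congr rfl
    intro j _
    ring
  have hNF : frobNorm Y ≤ nuclearNorm Y := frob_le_nuclear Y
  have hdual : ∑ i, ∑ j, Y i j * Z i j ≤ σ0 * nuclearNorm Y :=
    dual_bound hm Y Z U V σ hU hV hσnn
      (fun j => hσa i0 j (by simp [hi0, Fin.le_def])) hZ
  rw [hPsi Y, hPsi Xstar, hXZ, hnucX, hfrobX, expand]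
  nlinarith [sq_nonneg (frobNorm Y - σ0), mul_nonneg (sub_nonneg.mpr (hσle i0))
    (sub_nonneg.mpr hNF), hdual, hFnn, hσ0nn]
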